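/- Assume each null p-value (each P_{ij} with H_{ij}=0) is independent of all the other 2m−1 p-values of the two studies, null p-values are stochastically at least uniform, and the selection rules S₁, S₂ are stable. Let 𝒮_i = S_i(P_i), S_i = |𝒮_i|, α₂ = α−α₁. Define R = max{r ∈ ℕ : #{j ∈ 𝒮₁∩𝒮₂ : P_{1j} ≤ rα₁/S₂ and P_{2j} ≤ rα₂/S₁} = r} (R = 0 if only r = 0 qualifies) and reject ℛ = {j ∈ 𝒮₁∩𝒮₂ : P_{1j} ≤ Rα₁/S₂ and P_{2j} ≤ Rα₂/S₁}. Then the FDR for replicability analysis satisfies E[|ℛ ∩ {j : (H_{1j},H_{2j}) ≠ (1,1)}| / max(|ℛ|,1)] ≤ α. (Theorem 2, item 1.) -/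

import Mathlib

open MeasureTheory ProbabilityTheory
open scoped ENNReal

/-- A selection rule is stable if, for any selected feature, changing its p-value so
that the feature is still selected, while all other p-values are held fixed, does not
change the set of selected features. -/
def StableSelection {m : ℕ} (S : (Fin m → ℝ) → Finset (Fin m)) : Prop :=
  ∀ p p' : Fin m → ℝ, ∀ j, j ∈ S p → j ∈ S p' → (∀ k, k ≠ j → p' k = p k) → S p' = S p

/-- The step-up count `R` of the two-study FDR-replicability procedure on the selected
set `sel`, with per-unit thresholds `a1, a2`:  the largest `r` such that exactly `r`
features `j ∈ sel` satisfy `q1 j ≤ r·a1` and `q2 j ≤ r·a2`. -/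
noncomputable def stepUpCount {m : ℕ} (sel : Set (Fin m)) (q1 q2 : Fin m → ℝ)
    (a1 a2 : ℝ) : ℕ :=
  sSup {r : ℕ | Nat.card {j : Fin m // j ∈ sel ∧ q1 j ≤ r * a1 ∧ q2 j ≤ r * a2} = r}

/-- The rejection region of the step-up procedure. -/
noncomputable def stepUpReject {m : ℕ} (sel : Set (Fin m)) (q1 q2 : Fin m → ℝ)
    (a1 a2 : ℝ) : Set (Fin m) :=
  {j | j ∈ sel ∧ q1 j ≤ (stepUpCount sel q1 q2 a1 a2) * a1
      ∧ q2 j ≤ (stepUpCount sel q1 q2 a1 a2) * a2}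

/-- The false discovery proportion for replicability analysis of a rejection set:
the number of rejected replicability nulls (features with `H1 j = false ∨ H2 j = false`)
divided by `max(#rejections, 1)`. -/
noncomputable def fdpRepl {m : ℕ} (H1 H2 : Fin m → Bool) (Rset : Set (Fin m)) : ℝ :=
  (Nat.card {j : Fin m // j ∈ Rset ∧ (H1 j = false ∨ H2 j = false)} : ℝ) /
    max (Nat.card {j : Fin m // j ∈ Rset} : ℝ) 1

namespace FdrAux

variable {m : ℕ}

/-- count function -/
noncomputable def cntFn (sel : Set (Fin m)) (q1 q2 : Fin m → ℝ) (a1 a2 : ℝ) (r : ℕ) : ℕ :=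
  Nat.card {j : Fin m // j ∈ sel ∧ q1 j ≤ r * a1 ∧ q2 j ≤ r * a2}

lemma natCard_subtype_le (P : Fin m → Prop) : Nat.card {j : Fin m // P j} ≤ m := by
  have := Nat.card_le_card_of_injective (fun j : {j : Fin m // P j} => j.1)
    (fun a b h => Subtype.ext h)
  simpa using this

lemma natCard_mono {P Q : Fin m → Prop} (h : ∀ j, P j → Q j) :
    Nat.card {j : Fin m // P j} ≤ Nat.card {j : Fin m // Q j} := by
  exact Nat.card_le_card_of_injective
    (fun a : {j : Fin m // P j} => (⟨a.1, h a.1 a.2⟩ : {j : Fin m // Q j}))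
    (fun a b hab => Subtype.ext (by simpa using congrArg Subtype.val hab))

lemma cntFn_le (sel : Set (Fin m)) (q1 q2 : Fin m → ℝ) (a1 a2 : ℝ) (r : ℕ) :
    cntFn sel q1 q2 a1 a2 r ≤ m := natCard_subtype_le _

lemma cntFn_mono (sel : Set (Fin m)) (q1 q2 : Fin m → ℝ) {a1 a2 : ℝ}
    (ha1 : 0 ≤ a1) (ha2 : 0 ≤ a2) {r r' : ℕ} (h : r ≤ r') :
    cntFn sel q1 q2 a1 a2 r ≤ cntFn sel q1 q2 a1 a2 r' := by
  refine natCard_mono fun j hj => ⟨hj.1, hj.2.1.trans ?_, hj.2.2.trans ?_⟩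
  · exact mul_le_mul_of_nonneg_right (by exact_mod_cast h) ha1
  · exact mul_le_mul_of_nonneg_right (by exact_mod_cast h) ha2

lemma cntFn_fixed_exists (sel : Set (Fin m)) (q1 q2 : Fin m → ℝ) {a1 a2 : ℝ}
    (ha1 : 0 ≤ a1) (ha2 : 0 ≤ a2) :
    ∃ r, cntFn sel q1 q2 a1 a2 r = r := by
  set f := cntFn sel q1 q2 a1 a2 with hf
  by_contra hno
  push_neg at hno
  -- then r ≤ f r → r+1 ≤ f (r+1) by induction
  have key : ∀ r : ℕ, r ≤ f r := by
    intro r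
    induction r with
    | zero => exact Nat.zero_le _
    | succ n ih =>
      have h1 : n < f n := lt_of_le_of_ne ih (fun h => hno n h.symm)
      calc n + 1 ≤ f n := h1
        _ ≤ f (n+1) := cntFn_mono sel q1 q2 ha1 ha2 (Nat.le_succ n)
  have h1 := key (m+1)
  have h2 := cntFn_le sel q1 q2 a1 a2 (m+1)
  rw [← hf] at h2
  omega

lemma bddAbove_fixed (sel : Set (Fin m)) (q1 q2 : Fin m → ℝ) (a1 a2 : ℝ) :
    BddAbove {r : ℕ | cntFn sel q1 q2 a1 a2 r = r} :=
  ⟨m, fun r hr => hr ▸ cntFn_le sel q1 q2 a1 a2 r⟩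

lemma stepUpCount_eq_sSup (sel : Set (Fin m)) (q1 q2 : Fin m → ℝ) (a1 a2 : ℝ) :
    stepUpCount sel q1 q2 a1 a2 = sSup {r : ℕ | cntFn sel q1 q2 a1 a2 r = r} := rfl

lemma cntFn_stepUpCount (sel : Set (Fin m)) (q1 q2 : Fin m → ℝ) {a1 a2 : ℝ}
    (ha1 : 0 ≤ a1) (ha2 : 0 ≤ a2) :
    cntFn sel q1 q2 a1 a2 (stepUpCount sel q1 q2 a1 a2) = stepUpCount sel q1 q2 a1 a2 := by
  have h1 := cntFn_fixed_exists sel q1 q2 ha1 ha2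
  exact Nat.sSup_mem h1 (bddAbove_fixed sel q1 q2 a1 a2)

lemma le_stepUpCount (sel : Set (Fin m)) (q1 q2 : Fin m → ℝ) (a1 a2 : ℝ) {r : ℕ}
    (h : cntFn sel q1 q2 a1 a2 r = r) : r ≤ stepUpCount sel q1 q2 a1 a2 :=
  le_csSup (bddAbove_fixed sel q1 q2 a1 a2) h

lemma stepUpCount_le (sel : Set (Fin m)) (q1 q2 : Fin m → ℝ) {a1 a2 : ℝ}
    (ha1 : 0 ≤ a1) (ha2 : 0 ≤ a2) : stepUpCount sel q1 q2 a1 a2 ≤ m := by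
  conv_lhs => rw [← cntFn_stepUpCount sel q1 q2 ha1 ha2]
  exact cntFn_le _ _ _ _ _ _

lemma stepUpCount_eq_iff (sel : Set (Fin m)) (q1 q2 : Fin m → ℝ) {a1 a2 : ℝ}
    (ha1 : 0 ≤ a1) (ha2 : 0 ≤ a2) (n : ℕ) :
    stepUpCount sel q1 q2 a1 a2 = n ↔
      (cntFn sel q1 q2 a1 a2 n = n ∧ ∀ r, n < r → cntFn sel q1 q2 a1 a2 r ≠ r) := by
  constructor
  · rintro rfl
    refine ⟨cntFn_stepUpCount sel q1 q2 ha1 ha2, fun r hr hfix => ?_⟩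
    exact absurd (le_stepUpCount sel q1 q2 a1 a2 hfix) (by omega)
  · rintro ⟨h1, h2⟩
    have hle := le_stepUpCount sel q1 q2 a1 a2 h1
    have hfix := cntFn_stepUpCount sel q1 q2 ha1 ha2
    rcases lt_or_eq_of_le hle with h | h
    · exact absurd hfix (h2 _ h)
    · exact h.symm

lemma mem_stepUpReject_iff (sel : Set (Fin m)) (q1 q2 : Fin m → ℝ) (a1 a2 : ℝ) (j : Fin m) :
    j ∈ stepUpReject sel q1 q2 a1 a2 ↔
      j ∈ sel ∧ q1 j ≤ (stepUpCount sel q1 q2 a1 a2) * a1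
        ∧ q2 j ≤ (stepUpCount sel q1 q2 a1 a2) * a2 := Iff.rfl

lemma card_stepUpReject (sel : Set (Fin m)) (q1 q2 : Fin m → ℝ) {a1 a2 : ℝ}
    (ha1 : 0 ≤ a1) (ha2 : 0 ≤ a2) :
    Nat.card {j : Fin m // j ∈ stepUpReject sel q1 q2 a1 a2} = stepUpCount sel q1 q2 a1 a2 := by
  have : Nat.card {j : Fin m // j ∈ stepUpReject sel q1 q2 a1 a2}
      = cntFn sel q1 q2 a1 a2 (stepUpCount sel q1 q2 a1 a2) := rfl
  rw [this, cntFn_stepUpCount sel q1 q2 ha1 ha2]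


lemma cntFn_update_eq (sel : Set (Fin m)) (q1 q2 : Fin m → ℝ) {a1 : ℝ} (a2 : ℝ)
    (ha1 : 0 ≤ a1) (j : Fin m) (t : ℝ) {r : ℕ} (ht : t ≤ r * a1) :
    cntFn sel (Function.update q1 j t) q2 a1 a2 r
      = cntFn sel (Function.update q1 j 0) q2 a1 a2 r := by
  unfold cntFn
  apply Nat.card_congr
  refine Equiv.subtypeEquivRight fun k => ?_
  by_cases hk : k = j
  · subst hk
    simp only [Function.update_self]
    constructor
    · rintro ⟨h1, _, h3⟩
      exact ⟨h1, mul_nonneg (Nat.cast_nonneg r) ha1, h3⟩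
    · rintro ⟨h1, _, h3⟩
      exact ⟨h1, ht, h3⟩
  · simp [Function.update_of_ne hk]

/-- Leave-one-out lemma. -/
lemma loo (sel : Set (Fin m)) (q1 q2 : Fin m → ℝ) {a1 a2 : ℝ}
    (ha1 : 0 ≤ a1) (ha2 : 0 ≤ a2) (j : Fin m) (hj : j ∈ sel) (t : ℝ) :
    (j ∈ stepUpReject sel (Function.update q1 j t) q2 a1 a2 ↔
      (t ≤ (stepUpCount sel (Function.update q1 j 0) q2 a1 a2) * a1 ∧
        q2 j ≤ (stepUpCount sel (Function.update q1 j 0) q2 a1 a2) * a2)) ∧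
    (t ≤ (stepUpCount sel (Function.update q1 j 0) q2 a1 a2) * a1 →
      q2 j ≤ (stepUpCount sel (Function.update q1 j 0) q2 a1 a2) * a2 →
      stepUpCount sel (Function.update q1 j t) q2 a1 a2
        = stepUpCount sel (Function.update q1 j 0) q2 a1 a2 ∧
      1 ≤ stepUpCount sel (Function.update q1 j 0) q2 a1 a2) := by
  set R0 := stepUpCount sel (Function.update q1 j 0) q2 a1 a2 with hR0
  set Rt := stepUpCount sel (Function.update q1 j t) q2 a1 a2 with hRt
  have hfix0 : cntFn sel (Function.update q1 j 0) q2 a1 a2 R0 = R0 :=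
    cntFn_stepUpCount sel _ q2 ha1 ha2
  have hfixt : cntFn sel (Function.update q1 j t) q2 a1 a2 Rt = Rt :=
    cntFn_stepUpCount sel _ q2 ha1 ha2
  have hmul : ∀ {r r' : ℕ}, r ≤ r' → (r : ℝ) * a1 ≤ (r' : ℝ) * a1 :=
    fun h => mul_le_mul_of_nonneg_right (by exact_mod_cast h) ha1
  have hmul2 : ∀ {r r' : ℕ}, r ≤ r' → (r : ℝ) * a2 ≤ (r' : ℝ) * a2 :=
    fun h => mul_le_mul_of_nonneg_right (by exact_mod_cast h) ha2
  have main : t ≤ (R0 : ℝ) * a1 → q2 j ≤ (R0 : ℝ) * a2 → Rt = R0 ∧ 1 ≤ R0 := by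
    intro h1 h2
    -- R0 ≤ Rt
    have e0 : cntFn sel (Function.update q1 j t) q2 a1 a2 R0 = R0 := by
      rw [cntFn_update_eq sel q1 q2 a2 ha1 j t h1]; exact hfix0
    have hle1 : R0 ≤ Rt := le_stepUpCount sel _ q2 a1 a2 e0
    -- t ≤ Rt * a1
    have h1t : t ≤ (Rt : ℝ) * a1 := h1.trans (hmul hle1)
    have e1 : cntFn sel (Function.update q1 j 0) q2 a1 a2 Rt = Rt := by
      rw [← cntFn_update_eq sel q1 q2 a2 ha1 j t h1t]; exact hfixt
    have hle2 : Rt ≤ R0 := le_stepUpCount sel _ q2 a1 a2 e1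
    have hR1 : 1 ≤ R0 := by
      rw [← hfix0]
      have : Nonempty {k : Fin m // k ∈ sel ∧
          Function.update q1 j 0 k ≤ (R0 : ℝ) * a1 ∧ q2 k ≤ (R0 : ℝ) * a2} := by
        refine ⟨⟨j, hj, ?_, h2⟩⟩
        simp only [Function.update_self]
        exact mul_nonneg (Nat.cast_nonneg R0) ha1
      exact Nat.card_pos
    exact ⟨le_antisymm hle2 hle1, hR1⟩
  constructor
  · constructor
    · intro hmem
      rcases (mem_stepUpReject_iff sel _ q2 a1 a2 j).1 hmem with ⟨_, h1, h2⟩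
      rw [Function.update_self] at h1
      -- t ≤ Rt a1, so cnt0 Rt = Rt, so Rt ≤ R0
      have e1 : cntFn sel (Function.update q1 j 0) q2 a1 a2 Rt = Rt := by
        rw [← cntFn_update_eq sel q1 q2 a2 ha1 j t h1]; exact hfixt
      have hle2 : Rt ≤ R0 := le_stepUpCount sel _ q2 a1 a2 e1
      exact ⟨h1.trans (hmul hle2), h2.trans (hmul2 hle2)⟩
    · rintro ⟨h1, h2⟩
      obtain ⟨hRteq, _⟩ := main h1 h2
      refine (mem_stepUpReject_iff sel _ q2 a1 a2 j).2 ⟨hj, ?_, ?_⟩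
      · rw [Function.update_self]; show t ≤ (Rt:ℝ) * a1; rw [hRteq]; exact h1
      · show q2 j ≤ (Rt:ℝ) * a2; rw [hRteq]; exact h2
  · exact main

lemma cntFn_swap (sel : Set (Fin m)) (q1 q2 : Fin m → ℝ) (a1 a2 : ℝ) (r : ℕ) :
    cntFn sel q1 q2 a1 a2 r = cntFn sel q2 q1 a2 a1 r := by
  unfold cntFn
  apply Nat.card_congr
  exact Equiv.subtypeEquivRight fun k => by tauto

lemma stepUpCount_swap (sel : Set (Fin m)) (q1 q2 : Fin m → ℝ) (a1 a2 : ℝ) :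
    stepUpCount sel q1 q2 a1 a2 = stepUpCount sel q2 q1 a2 a1 := by
  rw [stepUpCount_eq_sSup, stepUpCount_eq_sSup]
  congr 1
  ext r
  simp only [Set.mem_setOf_eq, cntFn_swap sel q1 q2 a1 a2]

lemma stepUpReject_swap (sel : Set (Fin m)) (q1 q2 : Fin m → ℝ) (a1 a2 : ℝ) :
    stepUpReject sel q1 q2 a1 a2 = stepUpReject sel q2 q1 a2 a1 := by
  ext j
  rw [mem_stepUpReject_iff, mem_stepUpReject_iff, stepUpCount_swap sel q1 q2 a1 a2]
  tauto


section Meas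

variable {Z : Type*} [MeasurableSpace Z]

lemma natCard_eq_filter_card (P : Fin m → Prop) [DecidablePred P] :
    Nat.card {k : Fin m // P k} = (Finset.univ.filter P).card := by
  simp [Nat.card_eq_fintype_card, Fintype.card_subtype]

lemma measurable_card_pred (C : Fin m → Set Z) (hC : ∀ k, MeasurableSet (C k)) :
    Measurable (fun z => Nat.card {k : Fin m // z ∈ C k}) := by
  classical
  apply measurable_to_countable'
  intro n
  have hset : (fun z => Nat.card {k : Fin m // z ∈ C k}) ⁻¹' {n}
      = ⋃ (F : Finset (Fin m)) (_ : F.card = n),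
          (⋂ k : Fin m, (if k ∈ F then C k else (C k)ᶜ)) := by
    ext z
    simp only [Set.mem_preimage, Set.mem_singleton_iff, Set.mem_iUnion, Set.mem_iInter]
    constructor
    · intro h
      refine ⟨Finset.univ.filter (fun k => z ∈ C k), ?_, fun k => ?_⟩
      · rw [natCard_eq_filter_card] at h
        exact h
      · by_cases hk : z ∈ C k
        · simp [hk]
        · simp [hk]
    · rintro ⟨F, hcard, hmem⟩
      have hF : F = Finset.univ.filter (fun k => z ∈ C k) := by
        ext k
        have := hmem k
        by_cases hk : k ∈ F
        · simp only [hk, if_true] at this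
          simp [hk, this]
        · simp only [hk, if_false] at this
          simp only [Finset.mem_filter, Finset.mem_univ, true_and]
          exact iff_of_false hk this
      rw [natCard_eq_filter_card, ← hF, hcard]
  rw [hset]
  refine MeasurableSet.iUnion fun F => MeasurableSet.iUnion fun _ =>
    MeasurableSet.iInter fun k => ?_
  by_cases hk : k ∈ F
  · simpa [hk] using hC k
  · simpa [hk] using (hC k).compl

lemma measurable_selEq (S : (Fin m → ℝ) → Finset (Fin m))
    (hS : ∀ k, MeasurableSet {p : Fin m → ℝ | k ∈ S p}) (u : Z → (Fin m → ℝ))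
    (hu : Measurable u) (A : Finset (Fin m)) :
    MeasurableSet {z | S (u z) = A} := by
  have hset : {z | S (u z) = A}
      = ⋂ k : Fin m, (if k ∈ A then (u ⁻¹' {p | k ∈ S p}) else (u ⁻¹' {p | k ∈ S p})ᶜ) := by
    ext z
    simp only [Set.mem_setOf_eq, Set.mem_iInter, Finset.ext_iff]
    constructor
    · intro h k
      by_cases hk : k ∈ A
      · simp [hk, (h k).2 hk]
      · have : k ∉ S (u z) := fun hc => hk ((h k).1 hc)
        simp [hk, this]
    · intro h k
      have := h k
      by_cases hk : k ∈ A
      · simp only [hk, if_true, Set.mem_preimage, Set.mem_setOf_eq] at this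
        exact ⟨fun _ => hk, fun _ => this⟩
      · simp only [hk, if_false, Set.mem_compl_iff, Set.mem_preimage, Set.mem_setOf_eq] at this
        exact ⟨fun hc => absurd hc this, fun hc => absurd hc hk⟩
  rw [hset]
  refine MeasurableSet.iInter fun k => ?_
  by_cases hk : k ∈ A
  · simpa [hk] using hu (hS k)
  · simpa [hk] using (hu (hS k)).compl

lemma measurable_selCard (S : (Fin m → ℝ) → Finset (Fin m))
    (hS : ∀ k, MeasurableSet {p : Fin m → ℝ | k ∈ S p}) (u : Z → (Fin m → ℝ))
    (hu : Measurable u) :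
    Measurable (fun z => (S (u z)).card) := by
  apply measurable_to_countable'
  intro n
  have hset : (fun z => (S (u z)).card) ⁻¹' {n}
      = ⋃ (A : Finset (Fin m)) (_ : A.card = n), {z | S (u z) = A} := by
    ext z
    simp only [Set.mem_preimage, Set.mem_singleton_iff, Set.mem_iUnion, Set.mem_setOf_eq]
    constructor
    · intro h
      exact ⟨S (u z), h, rfl⟩
    · rintro ⟨A, hA, rfl⟩
      exact hA
  rw [hset]
  exact MeasurableSet.iUnion fun A => MeasurableSet.iUnion fun _ =>
    measurable_selEq S hS u hu A

end Meas


section Meas2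

variable {Z : Type*} [MeasurableSpace Z] {u v : Z → (Fin m → ℝ)}

lemma measurable_cntFn_fixed (hu : Measurable u) (hv : Measurable v)
    (sel : Set (Fin m)) (c1 c2 : ℝ) (r : ℕ) :
    Measurable (fun z => cntFn sel (u z) (v z) c1 c2 r) := by
  have h := measurable_card_pred (m := m)
    (C := fun k => {z : Z | k ∈ sel ∧ u z k ≤ r * c1 ∧ v z k ≤ r * c2}) ?_
  · exact h
  · intro k
    by_cases hk : k ∈ sel
    · show MeasurableSet {z : Z | k ∈ sel ∧ u z k ≤ r * c1 ∧ v z k ≤ r * c2}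
      have : {z : Z | k ∈ sel ∧ u z k ≤ r * c1 ∧ v z k ≤ r * c2}
          = {z | u z k ≤ r * c1} ∩ {z | v z k ≤ r * c2} := by
        ext z; simp [hk]
      rw [this]
      exact (measurableSet_le ((measurable_pi_apply k).comp hu) measurable_const).inter
        (measurableSet_le ((measurable_pi_apply k).comp hv) measurable_const)
    · show MeasurableSet {z : Z | k ∈ sel ∧ u z k ≤ r * c1 ∧ v z k ≤ r * c2}
      have : {z : Z | k ∈ sel ∧ u z k ≤ r * c1 ∧ v z k ≤ r * c2} = ∅ := by
        ext z; simp [hk]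
      rw [this]; exact MeasurableSet.empty

lemma measurable_stepUpCount_fixed (hu : Measurable u) (hv : Measurable v)
    (sel : Set (Fin m)) {c1 c2 : ℝ} (hc1 : 0 ≤ c1) (hc2 : 0 ≤ c2) :
    Measurable (fun z => stepUpCount sel (u z) (v z) c1 c2) := by
  apply measurable_to_countable'
  intro n
  have hset : (fun z => stepUpCount sel (u z) (v z) c1 c2) ⁻¹' {n}
      = {z | cntFn sel (u z) (v z) c1 c2 n = n} ∩
        ⋂ (r : ℕ) (_ : r ∈ Finset.Ioc n m), {z | cntFn sel (u z) (v z) c1 c2 r = r}ᶜ := by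
    ext z
    simp only [Set.mem_preimage, Set.mem_singleton_iff, Set.mem_inter_iff, Set.mem_setOf_eq,
      Set.mem_iInter, Set.mem_compl_iff, Finset.mem_Ioc]
    rw [stepUpCount_eq_iff sel (u z) (v z) hc1 hc2 n]
    constructor
    · rintro ⟨h1, h2⟩
      exact ⟨h1, fun r hr => h2 r hr.1⟩
    · rintro ⟨h1, h2⟩
      refine ⟨h1, fun r hr hfix => ?_⟩
      by_cases hrm : r ≤ m
      · exact h2 r ⟨hr, hrm⟩ hfix
      · have := cntFn_le sel (u z) (v z) c1 c2 r
        omega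
  rw [hset]
  refine MeasurableSet.inter ?_ (MeasurableSet.iInter fun r => MeasurableSet.iInter fun _ => ?_)
  · exact measurable_cntFn_fixed hu hv sel c1 c2 n (measurableSet_singleton n)
  · exact (measurable_cntFn_fixed hu hv sel c1 c2 r (measurableSet_singleton r)).compl

variable (SA SB : (Fin m → ℝ) → Finset (Fin m))

lemma measurable_stepUpCount_sel
    (hSA : ∀ k, MeasurableSet {p : Fin m → ℝ | k ∈ SA p})
    (hSB : ∀ k, MeasurableSet {p : Fin m → ℝ | k ∈ SB p})
    (hu : Measurable u) (hv : Measurable v) {aA aB : ℝ} (haA : 0 ≤ aA) (haB : 0 ≤ aB) :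
    Measurable (fun z => stepUpCount (↑(SA (u z) ∩ SB (v z))) (u z) (v z)
      (aA / (SB (v z)).card) (aB / (SA (u z)).card)) := by
  apply measurable_to_countable'
  intro n
  have hset : (fun z => stepUpCount (↑(SA (u z) ∩ SB (v z))) (u z) (v z)
        (aA / (SB (v z)).card) (aB / (SA (u z)).card)) ⁻¹' {n}
      = ⋃ (A : Finset (Fin m)) (B : Finset (Fin m)),
          ({z | SA (u z) = A} ∩ {z | SB (v z) = B} ∩
            (fun z => stepUpCount (↑(A ∩ B)) (u z) (v z)
              (aA / B.card) (aB / A.card)) ⁻¹' {n}) := by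
    ext z
    simp only [Set.mem_preimage, Set.mem_singleton_iff, Set.mem_iUnion, Set.mem_inter_iff,
      Set.mem_setOf_eq]
    constructor
    · intro h
      exact ⟨SA (u z), SB (v z), ⟨rfl, rfl⟩, h⟩
    · rintro ⟨A, B, ⟨hA, hB⟩, h⟩
      rw [hA, hB]
      exact h
  rw [hset]
  refine MeasurableSet.iUnion fun A => MeasurableSet.iUnion fun B => ?_
  refine ((measurable_selEq SA hSA u hu A).inter (measurable_selEq SB hSB v hv B)).inter ?_
  exact measurable_stepUpCount_fixed hu hv _
    (div_nonneg haA (Nat.cast_nonneg _)) (div_nonneg haB (Nat.cast_nonneg _))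
    (measurableSet_singleton n)

lemma measurableSet_rej
    (hSA : ∀ k, MeasurableSet {p : Fin m → ℝ | k ∈ SA p})
    (hSB : ∀ k, MeasurableSet {p : Fin m → ℝ | k ∈ SB p})
    (hu : Measurable u) (hv : Measurable v) {aA aB : ℝ} (haA : 0 ≤ aA) (haB : 0 ≤ aB)
    (j : Fin m) :
    MeasurableSet {z | j ∈ stepUpReject (↑(SA (u z) ∩ SB (v z))) (u z) (v z)
      (aA / (SB (v z)).card) (aB / (SA (u z)).card)} := by
  have hRg := measurable_stepUpCount_sel SA SB hSA hSB hu hv haA haB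
  have hcastRg : Measurable (fun z => ((stepUpCount (↑(SA (u z) ∩ SB (v z))) (u z) (v z)
      (aA / (SB (v z)).card) (aB / (SA (u z)).card) : ℕ) : ℝ)) :=
    (measurable_from_top (f := fun n : ℕ => (n : ℝ))).comp hRg
  have hcardA : Measurable (fun z => ((SA (u z)).card : ℝ)) :=
    (measurable_from_top (f := fun n : ℕ => (n : ℝ))).comp (measurable_selCard SA hSA u hu)
  have hcardB : Measurable (fun z => ((SB (v z)).card : ℝ)) :=
    (measurable_from_top (f := fun n : ℕ => (n : ℝ))).comp (measurable_selCard SB hSB v hv)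
  have hset : {z | j ∈ stepUpReject (↑(SA (u z) ∩ SB (v z))) (u z) (v z)
        (aA / (SB (v z)).card) (aB / (SA (u z)).card)}
      = ({z | j ∈ SA (u z)} ∩ {z | j ∈ SB (v z)}) ∩
        ({z | u z j ≤ (stepUpCount (↑(SA (u z) ∩ SB (v z))) (u z) (v z)
            (aA / (SB (v z)).card) (aB / (SA (u z)).card) : ℝ) * (aA / (SB (v z)).card)} ∩
         {z | v z j ≤ (stepUpCount (↑(SA (u z) ∩ SB (v z))) (u z) (v z)
            (aA / (SB (v z)).card) (aB / (SA (u z)).card) : ℝ) * (aB / (SA (u z)).card)}) := by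
    ext z
    simp only [Set.mem_setOf_eq, Set.mem_inter_iff, mem_stepUpReject_iff, Finset.coe_inter,
      Set.mem_inter_iff, Finset.mem_coe]
    try tauto
  rw [hset]
  refine MeasurableSet.inter ((hu (hSA j)).inter (hv (hSB j))) (MeasurableSet.inter ?_ ?_)
  · exact measurableSet_le ((measurable_pi_apply j).comp hu)
      (hcastRg.mul (measurable_const.div hcardB))
  · exact measurableSet_le ((measurable_pi_apply j).comp hv)
      (hcastRg.mul (measurable_const.div hcardA))

end Meas2


section Key

/-- Reconstruct full p-value vector from (value at j, values off j). -/
def pAfun (j : Fin m) (z : ℝ × (({k : Fin m // k ≠ j} → ℝ) × (Fin m → ℝ))) : Fin m → ℝ :=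
  fun k => if h : k = j then z.1 else z.2.1 ⟨k, h⟩

lemma measurable_pAfun (j : Fin m) : Measurable (pAfun (m := m) j) := by
  apply measurable_pi_lambda
  intro k
  by_cases h : k = j
  · simp only [pAfun, h, dif_pos]
    exact measurable_fst
  · simp only [pAfun, dif_neg h]
    exact (measurable_pi_apply (⟨k, h⟩ : {k : Fin m // k ≠ j})).comp
      (measurable_fst.comp measurable_snd)

lemma pAfun_update (j : Fin m) (w : ({k : Fin m // k ≠ j} → ℝ) × (Fin m → ℝ)) (x x₀ : ℝ) :
    pAfun j (x, w) = Function.update (pAfun j (x₀, w)) j x := by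
  funext k
  by_cases h : k = j
  · subst h
    simp [pAfun, Function.update_self]
  · simp [pAfun, dif_neg h, Function.update_of_ne h]

open scoped Classical in
noncomputable def Gfun (SA SB : (Fin m → ℝ) → Finset (Fin m)) (aA aB : ℝ) (j : Fin m)
    (z : ℝ × (({k : Fin m // k ≠ j} → ℝ) × (Fin m → ℝ))) : ℝ≥0∞ :=
  if j ∈ stepUpReject (↑(SA (pAfun j z) ∩ SB z.2.2)) (pAfun j z) z.2.2
      (aA / (SB z.2.2).card) (aB / (SA (pAfun j z)).card)
  then ((max (stepUpCount (↑(SA (pAfun j z) ∩ SB z.2.2)) (pAfun j z) z.2.2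
      (aA / (SB z.2.2).card) (aB / (SA (pAfun j z)).card)) 1 : ℕ) : ℝ≥0∞)⁻¹
  else 0

open scoped Classical in
noncomputable def Bndfun (SB : (Fin m → ℝ) → Finset (Fin m)) (aA : ℝ) (j : Fin m)
    (w : ({k : Fin m // k ≠ j} → ℝ) × (Fin m → ℝ)) : ℝ≥0∞ :=
  if j ∈ SB w.2 then ENNReal.ofReal aA * ((SB w.2).card : ℝ≥0∞)⁻¹ else 0

lemma measurable_Gfun (SA SB : (Fin m → ℝ) → Finset (Fin m))
    (hSA : ∀ k, MeasurableSet {p : Fin m → ℝ | k ∈ SA p})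
    (hSB : ∀ k, MeasurableSet {p : Fin m → ℝ | k ∈ SB p})
    {aA aB : ℝ} (haA : 0 ≤ aA) (haB : 0 ≤ aB) (j : Fin m) :
    Measurable (Gfun SA SB aA aB j) := by
  classical
  have hu : Measurable (fun z : ℝ × (({k : Fin m // k ≠ j} → ℝ) × (Fin m → ℝ)) => pAfun j z) :=
    measurable_pAfun j
  have hv : Measurable (fun z : ℝ × (({k : Fin m // k ≠ j} → ℝ) × (Fin m → ℝ)) => z.2.2) :=
    measurable_snd.comp measurable_snd
  have hrej := measurableSet_rej SA SB hSA hSB hu hv haA haB j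
  have hRg := measurable_stepUpCount_sel SA SB hSA hSB hu hv haA haB
  have hval : Measurable (fun z : ℝ × (({k : Fin m // k ≠ j} → ℝ) × (Fin m → ℝ)) =>
      ((max (stepUpCount (↑(SA (pAfun j z) ∩ SB z.2.2)) (pAfun j z) z.2.2
        (aA / (SB z.2.2).card) (aB / (SA (pAfun j z)).card)) 1 : ℕ) : ℝ≥0∞)⁻¹) :=
    (measurable_from_top (f := fun n : ℕ => ((max n 1 : ℕ) : ℝ≥0∞)⁻¹)).comp hRg
  unfold Gfun
  exact Measurable.ite hrej hval measurable_const

lemma measurable_Bndfun (SB : (Fin m → ℝ) → Finset (Fin m))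
    (hSB : ∀ k, MeasurableSet {p : Fin m → ℝ | k ∈ SB p}) (aA : ℝ) (j : Fin m) :
    Measurable (Bndfun SB aA j) := by
  classical
  have hv : Measurable (fun w : ({k : Fin m // k ≠ j} → ℝ) × (Fin m → ℝ) => w.2) :=
    measurable_snd
  have hval : Measurable (fun w : ({k : Fin m // k ≠ j} → ℝ) × (Fin m → ℝ) =>
      ENNReal.ofReal aA * ((SB w.2).card : ℝ≥0∞)⁻¹) :=
    (measurable_from_top (f := fun n : ℕ => ENNReal.ofReal aA * (n : ℝ≥0∞)⁻¹)).comp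
      (measurable_selCard SB hSB _ hv)
  unfold Bndfun
  exact Measurable.ite (hv (hSB j)) hval measurable_const

/-- The crux: for fixed `w`, the integral over the null p-value is bounded. -/
lemma crux (SA SB : (Fin m → ℝ) → Finset (Fin m)) (hstA : StableSelection SA)
    {aA aB : ℝ} (haA0 : 0 < aA) (haA1 : aA ≤ 1) (haB : 0 ≤ aB) (j : Fin m)
    (ν : Measure ℝ) (hν : ∀ c, 0 ≤ c → c ≤ 1 → ν (Set.Iic c) ≤ ENNReal.ofReal c)
    (w : ({k : Fin m // k ≠ j} → ℝ) × (Fin m → ℝ)) :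
    ∫⁻ x, Gfun SA SB aA aB j (x, w) ∂ν ≤ Bndfun SB aA j w := by
  classical
  by_cases hex : ∃ x : ℝ, j ∈ stepUpReject (↑(SA (pAfun j (x, w)) ∩ SB w.2))
      (pAfun j (x, w)) w.2 (aA / (SB w.2).card) (aB / (SA (pAfun j (x, w))).card)
  · obtain ⟨x₀, hx₀⟩ := hex
    set p₀ := pAfun j (x₀, w) with hp₀
    set A := SA p₀ with hA
    set B := SB w.2 with hB
    obtain ⟨hjsel, hx1, hx2⟩ := (mem_stepUpReject_iff _ _ _ _ _ j).1 hx₀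
    have hjAB : j ∈ A ∩ B := by
      rwa [Finset.mem_coe] at hjsel
    have hjA : j ∈ A := (Finset.mem_inter.1 hjAB).1
    have hjB : j ∈ B := (Finset.mem_inter.1 hjAB).2
    set c1 := aA / (B.card : ℝ) with hc1def
    set c2 := aB / (A.card : ℝ) with hc2def
    have hc1 : 0 ≤ c1 := div_nonneg haA0.le (Nat.cast_nonneg _)
    have hc2 : 0 ≤ c2 := div_nonneg haB (Nat.cast_nonneg _)
    have hAeq : ∀ x : ℝ, j ∈ SA (pAfun j (x, w)) → SA (pAfun j (x, w)) = A := by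
      intro x hx
      refine hstA p₀ (pAfun j (x, w)) j hjA hx ?_
      intro k hk
      rw [pAfun_update j w x x₀]
      exact Function.update_of_ne hk _ _
    set R0 := stepUpCount (↑(A ∩ B)) (Function.update p₀ j 0) w.2 c1 c2 with hR0def
    have hjselAB : j ∈ (↑(A ∩ B) : Set (Fin m)) := hjsel
    -- transfer hx₀ to update form
    have hp₀x₀ : Function.update p₀ j x₀ = p₀ := by
      rw [← pAfun_update j w x₀ x₀]
    have hx₀' : j ∈ stepUpReject (↑(A ∩ B)) (Function.update p₀ j x₀) w.2 c1 c2 := by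
      rw [hp₀x₀]
      exact hx₀
    have hloo0 := loo (↑(A ∩ B) : Set (Fin m)) p₀ w.2 hc1 hc2 j hjselAB x₀
    obtain ⟨hx₀le1, hx₀le2⟩ := hloo0.1.1 hx₀'
    obtain ⟨-, hR0pos⟩ := hloo0.2 hx₀le1 hx₀le2
    -- R0 ≤ B.card
    have hR0le : R0 ≤ B.card := by
      have h1 : cntFn (↑(A ∩ B)) (Function.update p₀ j 0) w.2 c1 c2 R0 = R0 :=
        cntFn_stepUpCount _ _ _ hc1 hc2
      have h2 : cntFn (↑(A ∩ B)) (Function.update p₀ j 0) w.2 c1 c2 R0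
          ≤ Nat.card {k : Fin m // k ∈ (↑(A ∩ B) : Set (Fin m))} :=
        natCard_mono fun k hk => hk.1
      have h3 : Nat.card {k : Fin m // k ∈ (↑(A ∩ B) : Set (Fin m))} = (A ∩ B).card := by
        rw [natCard_eq_filter_card]
        congr 1
        ext k
        simp
      have h4 : (A ∩ B).card ≤ B.card := Finset.card_le_card Finset.inter_subset_right
      omega
    have hBpos : 0 < B.card := Finset.card_pos.2 ⟨j, hjB⟩
    set c : ℝ := (R0 : ℝ) * c1 with hcdef
    have hc0 : 0 ≤ c := mul_nonneg (Nat.cast_nonneg _) hc1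
    have hcle1 : c ≤ 1 := by
      have h1 : (R0 : ℝ) ≤ (B.card : ℝ) := by exact_mod_cast hR0le
      have h2 : c ≤ (B.card : ℝ) * (aA / (B.card : ℝ)) :=
        mul_le_mul_of_nonneg_right h1 hc1
      have h3 : (B.card : ℝ) * (aA / (B.card : ℝ)) = aA := by
        rw [mul_div_assoc', mul_div_cancel_left₀ aA (Nat.cast_pos.2 hBpos).ne']
      linarith
    have hpt : ∀ x : ℝ, Gfun SA SB aA aB j (x, w)
        ≤ Set.indicator (Set.Iic c) (fun _ => ((R0 : ℕ) : ℝ≥0∞)⁻¹) x := by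
      intro x
      by_cases hmem : j ∈ stepUpReject (↑(SA (pAfun j (x, w)) ∩ SB w.2))
          (pAfun j (x, w)) w.2 (aA / (SB w.2).card) (aB / (SA (pAfun j (x, w))).card)
      · have hjx : j ∈ SA (pAfun j (x, w)) := by
          have := ((mem_stepUpReject_iff _ _ _ _ _ j).1 hmem).1
          rw [Finset.mem_coe, Finset.mem_inter] at this
          exact this.1
        have hAx : SA (pAfun j (x, w)) = A := hAeq x hjx
        have hmem' : j ∈ stepUpReject (↑(A ∩ B)) (Function.update p₀ j x) w.2 c1 c2 := by
          rw [← pAfun_update j w x x₀]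
          rw [hAx] at hmem
          exact hmem
        have hloox := loo (↑(A ∩ B) : Set (Fin m)) p₀ w.2 hc1 hc2 j hjselAB x
        obtain ⟨hle1, hle2⟩ := hloox.1.1 hmem'
        obtain ⟨hRx, -⟩ := hloox.2 hle1 hle2
        have hGval : Gfun SA SB aA aB j (x, w) = ((R0 : ℕ) : ℝ≥0∞)⁻¹ := by
          rw [Gfun]
          rw [if_pos hmem]
          congr 1
          have : stepUpCount (↑(SA (pAfun j (x, w)) ∩ SB w.2)) (pAfun j (x, w)) w.2
              (aA / (SB w.2).card) (aB / (SA (pAfun j (x, w))).card) = R0 := by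
            rw [hAx]
            rw [show pAfun j (x, w) = Function.update p₀ j x from pAfun_update j w x x₀]
            exact hRx
          rw [this]
          congr 1
          omega
        rw [hGval]
        have hxIic : x ∈ Set.Iic c := hle1
        rw [Set.indicator_of_mem hxIic]
      · rw [Gfun]
        rw [if_neg hmem]
        exact zero_le
    calc ∫⁻ x, Gfun SA SB aA aB j (x, w) ∂ν
        ≤ ∫⁻ x, Set.indicator (Set.Iic c) (fun _ => ((R0 : ℕ) : ℝ≥0∞)⁻¹) x ∂ν :=
          lintegral_mono hpt
      _ = ((R0 : ℕ) : ℝ≥0∞)⁻¹ * ν (Set.Iic c) := lintegral_indicator_const measurableSet_Iic _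
      _ ≤ ((R0 : ℕ) : ℝ≥0∞)⁻¹ * ENNReal.ofReal c := by
          exact mul_le_mul_right (hν c hc0 hcle1) _
      _ ≤ Bndfun SB aA j w := by
          have hR0ne : ((R0 : ℕ) : ℝ≥0∞) ≠ 0 := by
            simp only [ne_eq, Nat.cast_eq_zero]
            omega
          have hR0top : ((R0 : ℕ) : ℝ≥0∞) ≠ ⊤ := ENNReal.natCast_ne_top _
          have h1 : ENNReal.ofReal c = ((R0 : ℕ) : ℝ≥0∞) * ENNReal.ofReal c1 := by
            rw [hcdef, ENNReal.ofReal_mul (Nat.cast_nonneg _)]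
            congr 1
            exact ENNReal.ofReal_natCast R0
          rw [h1, ← mul_assoc, ENNReal.inv_mul_cancel hR0ne hR0top, one_mul]
          have h2 : ENNReal.ofReal c1 = ENNReal.ofReal aA * ((B.card : ℕ) : ℝ≥0∞)⁻¹ := by
            rw [hc1def, ENNReal.ofReal_div_of_pos (by exact_mod_cast hBpos), div_eq_mul_inv]
            congr 2
            exact ENNReal.ofReal_natCast B.card
          rw [h2, Bndfun]
          rw [if_pos hjB]
  · push_neg at hex
    have : ∀ x : ℝ, Gfun SA SB aA aB j (x, w) = 0 := by
      intro x
      rw [Gfun]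
      rw [if_neg (hex x)]
    calc ∫⁻ x, Gfun SA SB aA aB j (x, w) ∂ν = 0 := by
          simp only [this, lintegral_zero]
      _ ≤ Bndfun SB aA j w := zero_le


lemma key {Ω : Type*} [MeasurableSpace Ω] (μ : Measure Ω) [IsProbabilityMeasure μ]
    (PA PB : Ω → Fin m → ℝ) (hPA : Measurable PA) (hPB : Measurable PB)
    (SA SB : (Fin m → ℝ) → Finset (Fin m)) (hstA : StableSelection SA)
    (hSA : ∀ k, MeasurableSet {p : Fin m → ℝ | k ∈ SA p})
    (hSB : ∀ k, MeasurableSet {p : Fin m → ℝ | k ∈ SB p})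
    {aA aB : ℝ} (haA0 : 0 < aA) (haA1 : aA ≤ 1) (haB : 0 ≤ aB) (j : Fin m)
    (hunif : ∀ x ∈ Set.Icc (0:ℝ) 1, μ {ω | PA ω j ≤ x} ≤ ENNReal.ofReal x)
    (hind : IndepFun (fun ω => PA ω j)
      (fun ω => ((fun k : {k : Fin m // k ≠ j} => PA ω k), PB ω)) μ) :
    ∫⁻ ω, Gfun SA SB aA aB j (PA ω j, ((fun k : {k : Fin m // k ≠ j} => PA ω k), PB ω)) ∂μ
      ≤ ∫⁻ ω, Bndfun SB aA j ((fun k : {k : Fin m // k ≠ j} => PA ω k), PB ω) ∂μ := by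
  classical
  set X : Ω → ℝ := fun ω => PA ω j with hXdef
  set W : Ω → (({k : Fin m // k ≠ j} → ℝ) × (Fin m → ℝ)) :=
    fun ω => ((fun k : {k : Fin m // k ≠ j} => PA ω k), PB ω) with hWdef
  have hX : Measurable X := (measurable_pi_apply j).comp hPA
  have hW : Measurable W :=
    Measurable.prodMk
      (measurable_pi_lambda _ fun k => (measurable_pi_apply (k : Fin m)).comp hPA) hPB
  have hZ : Measurable (fun ω => (X ω, W ω)) := hX.prodMk hW
  have hG : Measurable (Gfun SA SB aA aB j) := measurable_Gfun SA SB hSA hSB haA0.le haB j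
  have hBnd : Measurable (Bndfun SB aA j) := measurable_Bndfun SB hSB aA j
  have hmap : μ.map (fun ω => (X ω, W ω)) = (μ.map X).prod (μ.map W) :=
    (indepFun_iff_map_prod_eq_prod_map_map hX.aemeasurable hW.aemeasurable).mp hind
  haveI : IsProbabilityMeasure (μ.map X) := Measure.isProbabilityMeasure_map hX.aemeasurable
  haveI : IsProbabilityMeasure (μ.map W) := Measure.isProbabilityMeasure_map hW.aemeasurable
  have hν : ∀ c : ℝ, 0 ≤ c → c ≤ 1 → (μ.map X) (Set.Iic c) ≤ ENNReal.ofReal c := by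
    intro c h0 h1
    rw [Measure.map_apply hX measurableSet_Iic]
    exact hunif c ⟨h0, h1⟩
  calc ∫⁻ ω, Gfun SA SB aA aB j (X ω, W ω) ∂μ
      = ∫⁻ z, Gfun SA SB aA aB j z ∂(μ.map (fun ω => (X ω, W ω))) :=
        (lintegral_map hG hZ).symm
    _ = ∫⁻ z, Gfun SA SB aA aB j z ∂((μ.map X).prod (μ.map W)) := by rw [hmap]
    _ = ∫⁻ w, ∫⁻ x, Gfun SA SB aA aB j (x, w) ∂(μ.map X) ∂(μ.map W) :=
        lintegral_prod_symm' _ hG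
    _ ≤ ∫⁻ w, Bndfun SB aA j w ∂(μ.map W) :=
        lintegral_mono (fun w => crux SA SB hstA haA0 haA1 haB j (μ.map X) hν w)
    _ = ∫⁻ ω, Bndfun SB aA j (W ω) ∂μ := lintegral_map hBnd hW

end Key


section Main

lemma pAfun_recon (j : Fin m) (p1 : Fin m → ℝ) (q : ({k : Fin m // k ≠ j} → ℝ) × (Fin m → ℝ))
    (h1 : q.1 = fun k : {k : Fin m // k ≠ j} => p1 k) :
    pAfun j (p1 j, q) = p1 := by
  funext k
  by_cases h : k = j
  · subst h; simp [pAfun]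
  · simp [pAfun, dif_neg h, h1]

open scoped Classical in
lemma Gfun_eval1 (S1 S2 : (Fin m → ℝ) → Finset (Fin m)) (aA aB : ℝ) (j : Fin m)
    (p1 p2 : Fin m → ℝ) :
    Gfun S1 S2 aA aB j (p1 j, ((fun k : {k : Fin m // k ≠ j} => p1 k), p2)) =
      if j ∈ stepUpReject (↑(S1 p1 ∩ S2 p2)) p1 p2 (aA / (S2 p2).card) (aB / (S1 p1).card)
      then ((max (stepUpCount (↑(S1 p1 ∩ S2 p2)) p1 p2
          (aA / (S2 p2).card) (aB / (S1 p1).card)) 1 : ℕ) : ℝ≥0∞)⁻¹ else 0 := by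
  have hrec : pAfun j (p1 j, ((fun k : {k : Fin m // k ≠ j} => p1 k), p2)) = p1 :=
    pAfun_recon j p1 _ rfl
  simp only [Gfun, hrec]

open scoped Classical in
lemma Gfun_eval2 (S1 S2 : (Fin m → ℝ) → Finset (Fin m)) (aA aB : ℝ) (j : Fin m)
    (p1 p2 : Fin m → ℝ) :
    Gfun S2 S1 aB aA j (p2 j, ((fun k : {k : Fin m // k ≠ j} => p2 k), p1)) =
      if j ∈ stepUpReject (↑(S1 p1 ∩ S2 p2)) p1 p2 (aA / (S2 p2).card) (aB / (S1 p1).card)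
      then ((max (stepUpCount (↑(S1 p1 ∩ S2 p2)) p1 p2
          (aA / (S2 p2).card) (aB / (S1 p1).card)) 1 : ℕ) : ℝ≥0∞)⁻¹ else 0 := by
  rw [Gfun_eval1 S2 S1 aB aA j p2 p1]
  rw [stepUpReject_swap, stepUpCount_swap]
  rw [show ((S2 p2 ∩ S1 p1 : Finset (Fin m)) : Set (Fin m)) = ↑(S1 p1 ∩ S2 p2) from
    by rw [Finset.inter_comm]]

open scoped Classical in
lemma sum_ite_le (B : Finset (Fin m)) (a : ℝ≥0∞) :
    (∑ j : Fin m, if j ∈ B then a * ((B.card : ℕ) : ℝ≥0∞)⁻¹ else 0) ≤ a := by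
  classical
  have h1 : (∑ j : Fin m, if j ∈ B then a * ((B.card : ℕ) : ℝ≥0∞)⁻¹ else 0)
      = ∑ j ∈ B, a * ((B.card : ℕ) : ℝ≥0∞)⁻¹ := by
    rw [Finset.sum_ite_mem, Finset.univ_inter]
  rw [h1, Finset.sum_const, nsmul_eq_mul]
  rcases Nat.eq_zero_or_pos B.card with h | h
  · simp [h]
  · have hne : ((B.card : ℕ) : ℝ≥0∞) ≠ 0 := by
      simp only [ne_eq, Nat.cast_eq_zero]; omega
    have htop : ((B.card : ℕ) : ℝ≥0∞) ≠ ⊤ := ENNReal.natCast_ne_top _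
    have heq : (B.card : ℝ≥0∞) * (a * ((B.card : ℕ) : ℝ≥0∞)⁻¹) = a := by
      rw [show (B.card : ℝ≥0∞) * (a * ((B.card : ℕ) : ℝ≥0∞)⁻¹)
          = a * ((B.card : ℝ≥0∞) * ((B.card : ℕ) : ℝ≥0∞)⁻¹) from by ring]
      rw [ENNReal.mul_inv_cancel hne htop, mul_one]
    exact heq.le

open scoped Classical in
lemma fdp_le_sum (H1 H2 : Fin m → Bool) (sel : Set (Fin m)) (q1 q2 : Fin m → ℝ)
    {a1 a2 : ℝ} (ha1 : 0 ≤ a1) (ha2 : 0 ≤ a2) :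
    ENNReal.ofReal (fdpRepl H1 H2 (stepUpReject sel q1 q2 a1 a2)) ≤
      (∑ j : Fin m, if H1 j = false ∧ j ∈ stepUpReject sel q1 q2 a1 a2
        then ((max (stepUpCount sel q1 q2 a1 a2) 1 : ℕ) : ℝ≥0∞)⁻¹ else 0)
      + (∑ j : Fin m, if H2 j = false ∧ j ∈ stepUpReject sel q1 q2 a1 a2
        then ((max (stepUpCount sel q1 q2 a1 a2) 1 : ℕ) : ℝ≥0∞)⁻¹ else 0) := by
  classical
  set R := stepUpCount sel q1 q2 a1 a2 with hR
  set D := max R 1 with hD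
  have hD0 : 0 < D := by omega
  have hcard : Nat.card {j : Fin m // j ∈ stepUpReject sel q1 q2 a1 a2} = R :=
    card_stepUpReject sel q1 q2 ha1 ha2
  set Nm := Nat.card {j : Fin m // j ∈ stepUpReject sel q1 q2 a1 a2
    ∧ (H1 j = false ∨ H2 j = false)} with hNm
  have hfdp : fdpRepl H1 H2 (stepUpReject sel q1 q2 a1 a2) = (Nm : ℝ) / (D : ℝ) := by
    rw [fdpRepl, hcard]
    congr 1
    rw [hD, Nat.cast_max, Nat.cast_one]
  rw [hfdp]
  have hofReal : ENNReal.ofReal ((Nm : ℝ) / (D : ℝ)) = (Nm : ℝ≥0∞) * ((D : ℕ) : ℝ≥0∞)⁻¹ := by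
    rw [ENNReal.ofReal_div_of_pos (by exact_mod_cast hD0), div_eq_mul_inv]
    rw [ENNReal.ofReal_natCast, ENNReal.ofReal_natCast]
  rw [hofReal]
  -- rewrite sums
  set N1 := (Finset.univ.filter
    (fun j : Fin m => H1 j = false ∧ j ∈ stepUpReject sel q1 q2 a1 a2)).card with hN1
  set N2 := (Finset.univ.filter
    (fun j : Fin m => H2 j = false ∧ j ∈ stepUpReject sel q1 q2 a1 a2)).card with hN2
  have hsum1 : (∑ j : Fin m, if H1 j = false ∧ j ∈ stepUpReject sel q1 q2 a1 a2
      then ((D : ℕ) : ℝ≥0∞)⁻¹ else 0) = (N1 : ℝ≥0∞) * ((D : ℕ) : ℝ≥0∞)⁻¹ := by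
    rw [← Finset.sum_filter, Finset.sum_const, nsmul_eq_mul, hN1]
  have hsum2 : (∑ j : Fin m, if H2 j = false ∧ j ∈ stepUpReject sel q1 q2 a1 a2
      then ((D : ℕ) : ℝ≥0∞)⁻¹ else 0) = (N2 : ℝ≥0∞) * ((D : ℕ) : ℝ≥0∞)⁻¹ := by
    rw [← Finset.sum_filter, Finset.sum_const, nsmul_eq_mul, hN2]
  rw [hsum1, hsum2]
  have hNle : Nm ≤ N1 + N2 := by
    have h1 : Nm = (Finset.univ.filter (fun j : Fin m =>
        j ∈ stepUpReject sel q1 q2 a1 a2 ∧ (H1 j = false ∨ H2 j = false))).card := by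
      rw [hNm, natCard_eq_filter_card]
    have h2 : (Finset.univ.filter (fun j : Fin m =>
        j ∈ stepUpReject sel q1 q2 a1 a2 ∧ (H1 j = false ∨ H2 j = false)))
        ⊆ (Finset.univ.filter
            (fun j : Fin m => H1 j = false ∧ j ∈ stepUpReject sel q1 q2 a1 a2))
          ∪ (Finset.univ.filter
            (fun j : Fin m => H2 j = false ∧ j ∈ stepUpReject sel q1 q2 a1 a2)) := by
      intro j hj
      simp only [Finset.mem_filter, Finset.mem_univ, true_and, Finset.mem_union] at *
      tauto
    calc Nm = _ := h1
      _ ≤ _ := Finset.card_le_card h2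
      _ ≤ N1 + N2 := Finset.card_union_le _ _
  calc (Nm : ℝ≥0∞) * ((D : ℕ) : ℝ≥0∞)⁻¹
      ≤ ((N1 + N2 : ℕ) : ℝ≥0∞) * ((D : ℕ) : ℝ≥0∞)⁻¹ := by
        apply mul_le_mul_left
        exact_mod_cast hNle
    _ = (N1 : ℝ≥0∞) * ((D : ℕ) : ℝ≥0∞)⁻¹ + (N2 : ℝ≥0∞) * ((D : ℕ) : ℝ≥0∞)⁻¹ := by
        push_cast
        ring

end Main

end FdrAux

open FdrAux

/-- Theorem 2, item 1.  If each null p-value is independent of all the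
other `2m − 1` p-values of the two studies, null p-values are stochastically at least
uniform, and the selection rules are stable, then the step-up FDR-replicability procedure
on `𝒮₁ ∩ 𝒮₂` with thresholds `(rα₁/S₂, r(α−α₁)/S₁)` controls the FDR for replicability
analysis at level `α`. -/
theorem fdr_replicability_indep
    {Ω : Type*} [MeasurableSpace Ω] (μ : Measure Ω) [IsProbabilityMeasure μ]
    (m : ℕ) (P1 P2 : Ω → Fin m → ℝ) (hP1 : Measurable P1) (hP2 : Measurable P2)
    (H1 H2 : Fin m → Bool)
    (hrange1 : ∀ ω j, P1 ω j ∈ Set.Icc (0:ℝ) 1) (hrange2 : ∀ ω j, P2 ω j ∈ Set.Icc (0:ℝ) 1)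
    -- null p-values are stochastically at least uniform
    (hunif1 : ∀ j, H1 j = false → ∀ x ∈ Set.Icc (0:ℝ) 1,
      μ {ω | P1 ω j ≤ x} ≤ ENNReal.ofReal x)
    (hunif2 : ∀ j, H2 j = false → ∀ x ∈ Set.Icc (0:ℝ) 1,
      μ {ω | P2 ω j ≤ x} ≤ ENNReal.ofReal x)
    -- each null p-value is independent of all the other 2m−1 p-values
    (hind1 : ∀ j, H1 j = false →
      IndepFun (fun ω => P1 ω j)
        (fun ω => ((fun k : {k : Fin m // k ≠ j} => P1 ω k), P2 ω)) μ)
    (hind2 : ∀ j, H2 j = false →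
      IndepFun (fun ω => P2 ω j)
        (fun ω => ((fun k : {k : Fin m // k ≠ j} => P2 ω k), P1 ω)) μ)
    -- stable (measurable) selection rules
    (S1 S2 : (Fin m → ℝ) → Finset (Fin m))
    (hstable1 : StableSelection S1) (hstable2 : StableSelection S2)
    (hS1 : ∀ j, MeasurableSet {p : Fin m → ℝ | j ∈ S1 p})
    (hS2 : ∀ j, MeasurableSet {p : Fin m → ℝ | j ∈ S2 p})
    (α α₁ : ℝ) (hα : α ∈ Set.Ioo (0:ℝ) 1) (hα₁ : α₁ ∈ Set.Ioo (0:ℝ) α) :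
    ∫ ω, fdpRepl H1 H2
        (stepUpReject (↑(S1 (P1 ω) ∩ S2 (P2 ω))) (P1 ω) (P2 ω)
          (α₁ / (S2 (P2 ω)).card) ((α - α₁) / (S1 (P1 ω)).card)) ∂μ
      ≤ α := by
  classical
  have hα₁0 : 0 < α₁ := hα₁.1
  have hα₂0 : 0 < α - α₁ := sub_pos.2 hα₁.2
  have hα₁1 : α₁ ≤ 1 := (hα₁.2.trans hα.2).le
  have hα₂1 : α - α₁ ≤ 1 := by nlinarith [hα.2, hα₁.1]
  -- the (ENNReal-valued) per-feature terms
  set tA : Fin m → Ω → ℝ≥0∞ := fun j ω =>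
    if H1 j = false then Gfun S1 S2 α₁ (α - α₁) j
      (P1 ω j, ((fun k : {k : Fin m // k ≠ j} => P1 ω k), P2 ω)) else 0 with htAdef
  set tB : Fin m → Ω → ℝ≥0∞ := fun j ω =>
    if H2 j = false then Gfun S2 S1 (α - α₁) α₁ j
      (P2 ω j, ((fun k : {k : Fin m // k ≠ j} => P2 ω k), P1 ω)) else 0 with htBdef
  have htAm : ∀ j, Measurable (tA j) := by
    intro j
    rw [htAdef]
    by_cases h : H1 j = false
    · simp only [h, if_true]
      exact (measurable_Gfun S1 S2 hS1 hS2 hα₁0.le hα₂0.le j).comp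
        (((measurable_pi_apply j).comp hP1).prodMk
          ((measurable_pi_lambda (fun ω (k : {k : Fin m // k ≠ j}) => P1 ω (k : Fin m))
            (fun k => (measurable_pi_apply (k : Fin m)).comp hP1)).prodMk hP2))
    · simp only [h, if_false]
      exact measurable_const
  have htBm : ∀ j, Measurable (tB j) := by
    intro j
    rw [htBdef]
    by_cases h : H2 j = false
    · simp only [h, if_true]
      exact (measurable_Gfun S2 S1 hS2 hS1 hα₂0.le hα₁0.le j).comp
        (((measurable_pi_apply j).comp hP2).prodMk
          ((measurable_pi_lambda (fun ω (k : {k : Fin m // k ≠ j}) => P2 ω (k : Fin m))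
            (fun k => (measurable_pi_apply (k : Fin m)).comp hP2)).prodMk hP1))
    · simp only [h, if_false]
      exact measurable_const
  -- pointwise bound
  have hpt : ∀ ω, ENNReal.ofReal (fdpRepl H1 H2
      (stepUpReject (↑(S1 (P1 ω) ∩ S2 (P2 ω))) (P1 ω) (P2 ω)
        (α₁ / (S2 (P2 ω)).card) ((α - α₁) / (S1 (P1 ω)).card)))
      ≤ (∑ j : Fin m, tA j ω) + (∑ j : Fin m, tB j ω) := by
    intro ω
    have ha1 : (0:ℝ) ≤ α₁ / (S2 (P2 ω)).card := div_nonneg hα₁0.le (Nat.cast_nonneg _)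
    have ha2 : (0:ℝ) ≤ (α - α₁) / (S1 (P1 ω)).card := div_nonneg hα₂0.le (Nat.cast_nonneg _)
    refine (fdp_le_sum H1 H2 (↑(S1 (P1 ω) ∩ S2 (P2 ω))) (P1 ω) (P2 ω) ha1 ha2).trans ?_
    apply add_le_add
    · apply Finset.sum_le_sum
      intro j _
      rw [htAdef]
      simp only []
      rw [Gfun_eval1 S1 S2 α₁ (α - α₁) j (P1 ω) (P2 ω)]
      by_cases h1 : H1 j = false
      · simp only [h1, true_and, if_true]
        exact le_rfl
      · simp only [h1, false_and, if_false]
        exact zero_le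
    · apply Finset.sum_le_sum
      intro j _
      rw [htBdef]
      simp only []
      rw [Gfun_eval2 S1 S2 α₁ (α - α₁) j (P1 ω) (P2 ω)]
      by_cases h2 : H2 j = false
      · simp only [h2, true_and, if_true]
        exact le_rfl
      · simp only [h2, false_and, if_false]
        exact zero_le
  -- the main lintegral estimate
  have hmain : ∫⁻ ω, ENNReal.ofReal (fdpRepl H1 H2
      (stepUpReject (↑(S1 (P1 ω) ∩ S2 (P2 ω))) (P1 ω) (P2 ω)
        (α₁ / (S2 (P2 ω)).card) ((α - α₁) / (S1 (P1 ω)).card))) ∂μ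
      ≤ ENNReal.ofReal α := by
    have hApart : (∑ j : Fin m, ∫⁻ ω, tA j ω ∂μ) ≤ ENNReal.ofReal α₁ := by
      have hbnd : ∀ j : Fin m, ∫⁻ ω, tA j ω ∂μ
          ≤ ∫⁻ ω, Bndfun S2 α₁ j ((fun k : {k : Fin m // k ≠ j} => P1 ω k), P2 ω) ∂μ := by
        intro j
        by_cases h : H1 j = false
        · have : tA j = fun ω => Gfun S1 S2 α₁ (α - α₁) j
              (P1 ω j, ((fun k : {k : Fin m // k ≠ j} => P1 ω k), P2 ω)) := by
            rw [htAdef]; simp only [h, if_true]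
          rw [this]
          exact key μ P1 P2 hP1 hP2 S1 S2 hstable1 hS1 hS2 hα₁0 hα₁1 hα₂0.le j
            (hunif1 j h) (hind1 j h)
        · have : tA j = fun _ => 0 := by
            rw [htAdef]; funext ω; simp [h]
          rw [this]
          simp only [lintegral_const, zero_mul]
          exact zero_le
      calc (∑ j : Fin m, ∫⁻ ω, tA j ω ∂μ)
          ≤ ∑ j : Fin m, ∫⁻ ω, Bndfun S2 α₁ j
              ((fun k : {k : Fin m // k ≠ j} => P1 ω k), P2 ω) ∂μ :=
            Finset.sum_le_sum fun j _ => hbnd j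
        _ = ∫⁻ ω, ∑ j : Fin m, Bndfun S2 α₁ j
              ((fun k : {k : Fin m // k ≠ j} => P1 ω k), P2 ω) ∂μ := by
            rw [lintegral_finset_sum]
            intro j _
            exact (measurable_Bndfun S2 hS2 α₁ j).comp
              ((measurable_pi_lambda (fun ω (k : {k : Fin m // k ≠ j}) => P1 ω (k : Fin m))
                (fun k => (measurable_pi_apply (k : Fin m)).comp hP1)).prodMk hP2)
        _ ≤ ∫⁻ _, ENNReal.ofReal α₁ ∂μ := by
            refine lintegral_mono fun ω => ?_
            have heach : ∀ j : Fin m, Bndfun S2 α₁ j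
                ((fun k : {k : Fin m // k ≠ j} => P1 ω k), P2 ω)
                = if j ∈ S2 (P2 ω)
                  then ENNReal.ofReal α₁ * (((S2 (P2 ω)).card : ℕ) : ℝ≥0∞)⁻¹ else 0 := by
              intro j
              rw [Bndfun]
            exact le_trans (le_of_eq (Finset.sum_congr rfl fun j _ => heach j))
              (sum_ite_le (S2 (P2 ω)) (ENNReal.ofReal α₁))
        _ = ENNReal.ofReal α₁ := by
            rw [lintegral_const, measure_univ, mul_one]
    have hBpart : (∑ j : Fin m, ∫⁻ ω, tB j ω ∂μ) ≤ ENNReal.ofReal (α - α₁) := by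
      have hbnd : ∀ j : Fin m, ∫⁻ ω, tB j ω ∂μ
          ≤ ∫⁻ ω, Bndfun S1 (α - α₁) j ((fun k : {k : Fin m // k ≠ j} => P2 ω k), P1 ω) ∂μ := by
        intro j
        by_cases h : H2 j = false
        · have : tB j = fun ω => Gfun S2 S1 (α - α₁) α₁ j
              (P2 ω j, ((fun k : {k : Fin m // k ≠ j} => P2 ω k), P1 ω)) := by
            rw [htBdef]; simp only [h, if_true]
          rw [this]
          exact key μ P2 P1 hP2 hP1 S2 S1 hstable2 hS2 hS1 hα₂0 hα₂1 hα₁0.le j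
            (hunif2 j h) (hind2 j h)
        · have : tB j = fun _ => 0 := by
            rw [htBdef]; funext ω; simp [h]
          rw [this]
          simp only [lintegral_const, zero_mul]
          exact zero_le
      calc (∑ j : Fin m, ∫⁻ ω, tB j ω ∂μ)
          ≤ ∑ j : Fin m, ∫⁻ ω, Bndfun S1 (α - α₁) j
              ((fun k : {k : Fin m // k ≠ j} => P2 ω k), P1 ω) ∂μ :=
            Finset.sum_le_sum fun j _ => hbnd j
        _ = ∫⁻ ω, ∑ j : Fin m, Bndfun S1 (α - α₁) j
              ((fun k : {k : Fin m // k ≠ j} => P2 ω k), P1 ω) ∂μ := by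
            rw [lintegral_finset_sum]
            intro j _
            exact (measurable_Bndfun S1 hS1 (α - α₁) j).comp
              ((measurable_pi_lambda (fun ω (k : {k : Fin m // k ≠ j}) => P2 ω (k : Fin m))
                (fun k => (measurable_pi_apply (k : Fin m)).comp hP2)).prodMk hP1)
        _ ≤ ∫⁻ _, ENNReal.ofReal (α - α₁) ∂μ := by
            refine lintegral_mono fun ω => ?_
            have heach : ∀ j : Fin m, Bndfun S1 (α - α₁) j
                ((fun k : {k : Fin m // k ≠ j} => P2 ω k), P1 ω)
                = if j ∈ S1 (P1 ω)
                  then ENNReal.ofReal (α - α₁) * (((S1 (P1 ω)).card : ℕ) : ℝ≥0∞)⁻¹ else 0 := by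
              intro j
              rw [Bndfun]
            exact le_trans (le_of_eq (Finset.sum_congr rfl fun j _ => heach j))
              (sum_ite_le (S1 (P1 ω)) (ENNReal.ofReal (α - α₁)))
        _ = ENNReal.ofReal (α - α₁) := by
            rw [lintegral_const, measure_univ, mul_one]
    calc ∫⁻ ω, ENNReal.ofReal (fdpRepl H1 H2
          (stepUpReject (↑(S1 (P1 ω) ∩ S2 (P2 ω))) (P1 ω) (P2 ω)
            (α₁ / (S2 (P2 ω)).card) ((α - α₁) / (S1 (P1 ω)).card))) ∂μ
        ≤ ∫⁻ ω, ((∑ j : Fin m, tA j ω) + (∑ j : Fin m, tB j ω)) ∂μ := lintegral_mono hpt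
      _ = (∫⁻ ω, ∑ j : Fin m, tA j ω ∂μ) + (∫⁻ ω, ∑ j : Fin m, tB j ω ∂μ) := by
          rw [lintegral_add_left (Finset.measurable_sum _ fun j _ => htAm j)]
      _ = (∑ j : Fin m, ∫⁻ ω, tA j ω ∂μ) + (∑ j : Fin m, ∫⁻ ω, tB j ω ∂μ) := by
          rw [lintegral_finset_sum _ fun j _ => htAm j,
            lintegral_finset_sum _ fun j _ => htBm j]
      _ ≤ ENNReal.ofReal α₁ + ENNReal.ofReal (α - α₁) := add_le_add hApart hBpart
      _ = ENNReal.ofReal α := by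
          rw [← ENNReal.ofReal_add hα₁0.le hα₂0.le]
          ring_nf
  -- conclude for the Bochner integral
  by_cases hint : Integrable (fun ω => fdpRepl H1 H2
      (stepUpReject (↑(S1 (P1 ω) ∩ S2 (P2 ω))) (P1 ω) (P2 ω)
        (α₁ / (S2 (P2 ω)).card) ((α - α₁) / (S1 (P1 ω)).card))) μ
  · have hnn : 0 ≤ᵐ[μ] fun ω => fdpRepl H1 H2
        (stepUpReject (↑(S1 (P1 ω) ∩ S2 (P2 ω))) (P1 ω) (P2 ω)
          (α₁ / (S2 (P2 ω)).card) ((α - α₁) / (S1 (P1 ω)).card)) := by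
      apply ae_of_all
      intro ω
      apply div_nonneg (Nat.cast_nonneg _)
      exact le_trans zero_le_one (le_max_right _ _)
    rw [integral_eq_lintegral_of_nonneg_ae hnn hint.aestronglyMeasurable]
    exact ENNReal.toReal_le_of_le_ofReal hα.1.le hmain
  · rw [integral_undef hint]
    exact hα.1.le
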